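/- Let 𝓐 be a finite central essential arrangement of hyperplanes in ℝ^d and X a flat (an intersection of some hyperplanes of 𝓐). For a chamber C adjacent to X (meaning closure(C) ∩ X has the same dimension as X), there is a unique chamber op_X(C) such that closure(op_X(C)) ∩ X = closure(C) ∩ X and S(C, op_X(C)) = 𝓐_X, where 𝓐_X = {H ∈ 𝓐 : X ⊆ H}. -/
import Mathlib


/-- The complement of a central arrangement `A` of (kernels of) linear forms on `ℝ^d`. -/
def arrComplement {d : ℕ} (A : Finset ((Fin d → ℝ) →ₗ[ℝ] ℝ)) : Set (Fin d → ℝ) :=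
  {x | ∀ f ∈ A, f x ≠ 0}

/-- `C` is a chamber of the central arrangement `A`. -/
def IsChamber {d : ℕ} (A : Finset ((Fin d → ℝ) →ₗ[ℝ] ℝ)) (C : Set (Fin d → ℝ)) : Prop :=
  ∃ x ∈ arrComplement A, C = connectedComponentIn (arrComplement A) x

/-- The hyperplane `ker f` separates `C` from `C'`. -/
def Separates {d : ℕ} (f : (Fin d → ℝ) →ₗ[ℝ] ℝ) (C C' : Set (Fin d → ℝ)) : Prop :=
  ((∀ x ∈ C, 0 < f x) ∧ (∀ x ∈ C', f x < 0)) ∨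
    ((∀ x ∈ C, f x < 0) ∧ (∀ x ∈ C', 0 < f x))

/-- The set `S(C,C')` of hyperplanes of `A` separating `C` and `C'`. -/
def sepSet {d : ℕ} (A : Finset ((Fin d → ℝ) →ₗ[ℝ] ℝ)) (C C' : Set (Fin d → ℝ)) :
    Set ((Fin d → ℝ) →ₗ[ℝ] ℝ) :=
  {f | f ∈ A ∧ Separates f C C'}

open Filter Topology Set

private lemma transfer_nonneg {a b c : ℝ} (h1 : 0 ≤ a * b) (h2 : 0 < b * c) : 0 ≤ a * c := by
  rcases lt_trichotomy b 0 with hb | hb | hb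
  · have hc : c < 0 := by nlinarith
    have ha : a ≤ 0 := by nlinarith
    nlinarith
  · rw [hb] at h2; simp at h2
  · have hc : 0 < c := by nlinarith
    have ha : 0 ≤ a := by nlinarith
    exact mul_nonneg ha hc.le

private lemma transfer_pos {a b c : ℝ} (h1 : 0 < a * b) (h2 : 0 < b * c) : 0 < a * c := by
  rcases lt_trichotomy b 0 with hb | hb | hb
  · have hc : c < 0 := by nlinarith
    have ha : a < 0 := by nlinarith
    nlinarith
  · rw [hb] at h2; simp at h2
  · have hc : 0 < c := by nlinarith
    have ha : 0 < a := by nlinarith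
    exact mul_pos ha hc

private lemma transfer_neg {a b c : ℝ} (h1 : a * b < 0) (h2 : b * c < 0) : 0 < a * c := by
  rcases lt_trichotomy b 0 with hb | hb | hb
  · have hc : 0 < c := by nlinarith
    have ha : 0 < a := by nlinarith
    exact mul_pos ha hc
  · rw [hb] at h2; simp at h2
  · have hc : c < 0 := by nlinarith
    have ha : a < 0 := by nlinarith
    nlinarith

private lemma avoid_hyperplanes {V : Type*} [AddCommGroup V] [Module ℝ V]
    {K : Set V} (hK : Convex ℝ K) (hne : K.Nonempty)
    (F : Finset (V →ₗ[ℝ] ℝ)) (h : ∀ f ∈ F, ∃ y ∈ K, f y ≠ 0) :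
    ∃ y ∈ K, ∀ f ∈ F, f y ≠ 0 := by
  classical
  induction F using Finset.induction_on with
  | empty => exact ⟨hne.choose, hne.choose_spec, by simp⟩
  | @insert g F hg ih =>

    obtain ⟨y, hyK, hy⟩ := ih (fun f hf => h f (Finset.mem_insert_of_mem hf))
    obtain ⟨z, hzK, hz⟩ := h g (Finset.mem_insert_self g _)
    have hfin : (⋃ f ∈ insert g F, {t : ℝ | f y + t * (f z - f y) = 0}).Finite := by
      apply Set.Finite.biUnion (Finset.finite_toSet _)
      intro f hf
      have hne' : ¬ (f y = 0 ∧ f z - f y = 0) := by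
        rintro ⟨h1, h2⟩
        rcases Finset.mem_insert.mp hf with rfl | hf'
        · exact hz (by linarith)
        · exact hy f hf' h1
      apply Set.Subsingleton.finite
      intro t₁ h₁ t₂ h₂
      simp only [Set.mem_setOf_eq] at h₁ h₂
      by_cases hb : f z - f y = 0
      · exact absurd ⟨by rw [hb, mul_zero, add_zero] at h₁; exact h₁, hb⟩ hne'
      · exact mul_right_cancel₀ hb (by linarith)
    have hIcc : ((Set.Icc (0:ℝ) 1) \ _).Nonempty := ((Set.Icc_infinite (by norm_num : (0:ℝ) < 1)).diff hfin).nonempty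
    obtain ⟨t, ⟨ht0, ht1⟩, htbad⟩ := hIcc
    refine ⟨(1 - t) • y + t • z, hK hyK hzK (by linarith) ht0 (by ring), ?_⟩
    intro f hf hf0
    apply htbad
    simp only [Set.mem_iUnion, Set.mem_setOf_eq]
    refine ⟨f, hf, ?_⟩
    have heq : f ((1 - t) • y + t • z) = (1 - t) * f y + t * f z := by
      simp [map_add, map_smul, smul_eq_mul]
    rw [heq] at hf0
    linear_combination hf0

private lemma reg_convex {d : ℕ} (A : Finset ((Fin d → ℝ) →ₗ[ℝ] ℝ)) (x₀ : Fin d → ℝ) :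
    Convex ℝ {x : Fin d → ℝ | ∀ f ∈ A, 0 < f x * f x₀} := by
  intro x hx y hy a b ha hb hab f hf
  have h1 := hx f hf
  have h2 := hy f hf
  have heq : f (a • x + b • y) = a * f x + b * f y := by
    simp [map_add, map_smul, smul_eq_mul]
  rw [heq]
  rcases eq_or_lt_of_le ha with h | h
  · have hb1 : b = 1 := by linarith
    simp [← h, hb1]; nlinarith
  · nlinarith [mul_pos h h1, mul_nonneg hb h2.le]

private lemma chamber_eq_region {d : ℕ} (A : Finset ((Fin d → ℝ) →ₗ[ℝ] ℝ)) {x₀ : Fin d → ℝ}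
    (hx₀ : x₀ ∈ arrComplement A) :
    connectedComponentIn (arrComplement A) x₀ = {x | ∀ f ∈ A, 0 < f x * f x₀} := by
  apply Set.Subset.antisymm
  · intro x hx f hf
    have hsub : connectedComponentIn (arrComplement A) x₀ ⊆ arrComplement A :=
      connectedComponentIn_subset _ _
    have himg : IsPreconnected (⇑f '' connectedComponentIn (arrComplement A) x₀) :=
      (isPreconnected_connectedComponentIn).image _ (f.continuous_of_finiteDimensional).continuousOn
    have hord := himg.ordConnected
    have hx0mem : f x₀ ∈ ⇑f '' connectedComponentIn (arrComplement A) x₀ :=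
      ⟨x₀, mem_connectedComponentIn hx₀, rfl⟩
    have hxmem : f x ∈ ⇑f '' connectedComponentIn (arrComplement A) x₀ := ⟨x, hx, rfl⟩
    by_contra h
    push_neg at h
    have hfx : f x ≠ 0 := hsub hx f hf
    have hfx₀ : f x₀ ≠ 0 := hx₀ f hf
    have h0 : (0:ℝ) ∈ ⇑f '' connectedComponentIn (arrComplement A) x₀ := by
      rcases lt_or_gt_of_ne hfx with h1 | h1
      · rcases lt_or_gt_of_ne hfx₀ with h2 | h2
        · nlinarith
        · exact hord.out hxmem hx0mem ⟨h1.le, h2.le⟩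
      · rcases lt_or_gt_of_ne hfx₀ with h2 | h2
        · exact hord.out hx0mem hxmem ⟨h2.le, h1.le⟩
        · nlinarith
    obtain ⟨w, hw, hw0⟩ := h0
    exact hsub hw f hf hw0
  · apply IsPreconnected.subset_connectedComponentIn
    · exact (reg_convex A x₀).isPreconnected
    · intro f hf; exact mul_self_pos.mpr (hx₀ f hf)
    · intro x hx f hf h0
      have := hx f hf
      rw [h0, zero_mul] at this
      exact lt_irrefl 0 this

private lemma closure_region {d : ℕ} (A : Finset ((Fin d → ℝ) →ₗ[ℝ] ℝ)) {x₀ : Fin d → ℝ}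
    (hx₀ : x₀ ∈ arrComplement A) :
    closure {x : Fin d → ℝ | ∀ f ∈ A, 0 < f x * f x₀} = {x | ∀ f ∈ A, 0 ≤ f x * f x₀} := by
  apply Set.Subset.antisymm
  · apply closure_minimal
    · intro x hx f hf; exact (hx f hf).le
    · have heq : {x : Fin d → ℝ | ∀ f ∈ A, 0 ≤ f x * f x₀} = ⋂ f ∈ A, {x | 0 ≤ f x * f x₀} := by
        ext; simp
      rw [heq]
      exact isClosed_biInter fun f hf =>
        isClosed_le continuous_const ((f.continuous_of_finiteDimensional).mul continuous_const)
  · intro w hw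
    have hcont : Continuous (fun t : ℝ => x₀ + t • (w - x₀)) := by continuity
    have htend : Tendsto (fun t : ℝ => x₀ + t • (w - x₀)) (𝓝[<] 1) (𝓝 w) := by
      have h1 := hcont.tendsto 1
      simp only [one_smul, add_sub_cancel] at h1
      exact h1.mono_left nhdsWithin_le_nhds
    apply mem_closure_of_tendsto htend
    filter_upwards [Ioo_mem_nhdsLT_of_mem (by norm_num : (1:ℝ) ∈ Ioc 0 1)] with t ht f hf
    have heq : f (x₀ + t • (w - x₀)) = (1 - t) * f x₀ + t * f w := by
      simp [map_add, map_smul, map_sub, smul_eq_mul]; ring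
    rw [heq]
    have h1 := hw f hf
    have h2 : 0 < f x₀ * f x₀ := mul_self_pos.mpr (hx₀ f hf)
    nlinarith [ht.1, ht.2, mul_nonneg ht.1.le h1]
/-- For a central essential arrangement `A`, a flat `X` (intersection of kernels of a
subset `s ⊆ A`), and a chamber `C` adjacent to `X` (the span of `closure C ∩ X` has
the dimension of `X`), there is a unique chamber `D = op_X(C)` with
`closure D ∩ X = closure C ∩ X` and `S(C,D) = A_X = {H ∈ A : X ⊆ H}`. -/
theorem exists_unique_opposite_chamber {d : ℕ} (A : Finset ((Fin d → ℝ) →ₗ[ℝ] ℝ))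
    (hA : ∀ f ∈ A, f ≠ 0) (hess : (⨅ f ∈ A, LinearMap.ker f) = ⊥)
    (s : Finset ((Fin d → ℝ) →ₗ[ℝ] ℝ)) (hs : s ⊆ A)
    (X : Submodule ℝ (Fin d → ℝ)) (hX : X = ⨅ f ∈ s, LinearMap.ker f)
    (C : Set (Fin d → ℝ)) (hC : IsChamber A C)
    (hadj : Module.finrank ℝ (Submodule.span ℝ (closure C ∩ (X : Set (Fin d → ℝ))))
      = Module.finrank ℝ X) :
    ∃! D : Set (Fin d → ℝ), IsChamber A D ∧
      closure D ∩ (X : Set (Fin d → ℝ)) = closure C ∩ (X : Set (Fin d → ℝ)) ∧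
      sepSet A C D = {f | f ∈ A ∧ X ≤ LinearMap.ker f} := by
  classical
  obtain ⟨x₀, hx₀, hCeq⟩ := hC
  have hCreg : C = {x | ∀ f ∈ A, 0 < f x * f x₀} := by rw [hCeq, chamber_eq_region A hx₀]
  have hclC : closure C = {x | ∀ f ∈ A, 0 ≤ f x * f x₀} := by rw [hCreg, closure_region A hx₀]
  have hx₀C : x₀ ∈ C := by
    rw [hCreg]; intro f hf; exact mul_self_pos.mpr (hx₀ f hf)
  have hCmem : ∀ x ∈ C, ∀ f ∈ A, 0 < f x * f x₀ := by
    intro x hx; rw [hCreg] at hx; exact hx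
  have hKconv : Convex ℝ (closure C ∩ (X : Set (Fin d → ℝ))) := by
    refine Convex.inter ?_ X.convex
    have : Convex ℝ C := by rw [hCreg]; exact reg_convex A x₀
    exact this.closure
  have hKne : (closure C ∩ (X : Set (Fin d → ℝ))).Nonempty := by
    refine ⟨0, ?_, X.zero_mem⟩
    rw [hclC]; intro f hf; simp
  have hspan : Submodule.span ℝ (closure C ∩ (X : Set (Fin d → ℝ))) = X := by
    apply Submodule.eq_of_le_of_finrank_le
    · rw [Submodule.span_le]; exact fun x hx => hx.2
    · exact hadj.ge
  have key : ∀ f ∈ A.filter (fun f => ¬ X ≤ LinearMap.ker f),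
      ∃ y ∈ closure C ∩ (X : Set (Fin d → ℝ)), f y ≠ 0 := by
    intro f hf
    rw [Finset.mem_filter] at hf
    by_contra h
    push_neg at h
    apply hf.2
    rw [← hspan, Submodule.span_le]
    intro x hx
    exact LinearMap.mem_ker.mpr (h x hx)
  obtain ⟨y, hyK, hy⟩ := avoid_hyperplanes hKconv hKne _ key
  have hyX : y ∈ (X : Set (Fin d → ℝ)) := hyK.2
  have hycl : ∀ f ∈ A, 0 ≤ f y * f x₀ := by
    have := hyK.1; rw [hclC] at this; exact this
  have hev : ∀ᶠ t : ℝ in 𝓝[>] 0, ∀ f ∈ A,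
      ((X ≤ LinearMap.ker f) → f ((1+t) • y - t • x₀) * f x₀ < 0) ∧
      (¬ (X ≤ LinearMap.ker f) → 0 < f ((1+t) • y - t • x₀) * f x₀) := by
    rw [Finset.eventually_all]
    intro f hf
    by_cases hXf : X ≤ LinearMap.ker f
    · have hfy : f y = 0 := hXf hyX
      filter_upwards [self_mem_nhdsWithin] with t ht
      refine ⟨fun _ => ?_, fun h => absurd hXf h⟩
      have heq : f ((1+t) • y - t • x₀) = -(t * f x₀) := by
        simp [map_sub, map_smul, smul_eq_mul, hfy]
      rw [heq]
      have htpos : (0:ℝ) < t := ht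
      nlinarith [mul_self_pos.mpr (hx₀ f hf)]
    · have hfy : f y ≠ 0 := hy f (Finset.mem_filter.mpr ⟨hf, hXf⟩)
      have hfy0 : 0 < f y * f x₀ :=
        lt_of_le_of_ne (hycl f hf) (Ne.symm (mul_ne_zero hfy (hx₀ f hf)))
      have hopen : IsOpen {t : ℝ | 0 < ((1+t) * f y - t * f x₀) * f x₀} := by
        apply isOpen_lt continuous_const
        fun_prop
      have h0 : (0:ℝ) ∈ {t : ℝ | 0 < ((1+t) * f y - t * f x₀) * f x₀} := by
        simpa using hfy0
      filter_upwards [mem_nhdsWithin_of_mem_nhds (hopen.mem_nhds h0)] with t ht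
      refine ⟨fun h => absurd h hXf, fun _ => ?_⟩
      have heq : f ((1+t) • y - t • x₀) = (1+t) * f y - t * f x₀ := by
        simp [map_sub, map_smul, smul_eq_mul]
      rw [heq]
      exact ht
  obtain ⟨t, ht⟩ := hev.exists
  set z : Fin d → ℝ := (1+t) • y - t • x₀ with hzdef
  have hzx : ∀ f ∈ A, X ≤ LinearMap.ker f → f z * f x₀ < 0 := fun f hf hXf => (ht f hf).1 hXf
  have hzx' : ∀ f ∈ A, ¬ X ≤ LinearMap.ker f → 0 < f z * f x₀ := fun f hf hXf => (ht f hf).2 hXf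
  have hzΩ : z ∈ arrComplement A := by
    intro f hf h0
    by_cases hXf : X ≤ LinearMap.ker f
    · have := hzx f hf hXf; rw [h0, zero_mul] at this; exact lt_irrefl 0 this
    · have := hzx' f hf hXf; rw [h0, zero_mul] at this; exact lt_irrefl 0 this
  have hDreg : connectedComponentIn (arrComplement A) z = {x | ∀ f ∈ A, 0 < f x * f z} :=
    chamber_eq_region A hzΩ
  have hclD : closure (connectedComponentIn (arrComplement A) z) = {x | ∀ f ∈ A, 0 ≤ f x * f z} := by
    rw [hDreg, closure_region A hzΩ]
  have hDmem : ∀ x ∈ connectedComponentIn (arrComplement A) z, ∀ f ∈ A, 0 < f x * f z := by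
    intro x hx; rw [hDreg] at hx; exact hx
  have hzD : z ∈ connectedComponentIn (arrComplement A) z := mem_connectedComponentIn hzΩ
  refine ⟨connectedComponentIn (arrComplement A) z, ⟨⟨z, hzΩ, rfl⟩, ?_, ?_⟩, ?_⟩
  · -- closures agree on X
    ext x
    simp only [Set.mem_inter_iff, hclD, hclC, Set.mem_setOf_eq]
    constructor
    · rintro ⟨h1, h2⟩
      refine ⟨fun f hf => ?_, h2⟩
      by_cases hXf : X ≤ LinearMap.ker f
      · have : f x = 0 := hXf h2; simp [this]
      · exact transfer_nonneg (h1 f hf) (hzx' f hf hXf)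
    · rintro ⟨h1, h2⟩
      refine ⟨fun f hf => ?_, h2⟩
      by_cases hXf : X ≤ LinearMap.ker f
      · have : f x = 0 := hXf h2; simp [this]
      · refine transfer_nonneg (h1 f hf) ?_
        have h3 := hzx' f hf hXf
        rw [mul_comm]; exact h3
  · -- separating set
    ext f
    simp only [sepSet, Set.mem_setOf_eq]
    constructor
    · rintro ⟨hfA, hsep⟩
      refine ⟨hfA, ?_⟩
      by_contra hXf
      have hzz : 0 < f z * f x₀ := hzx' f hfA hXf
      clear hXf
      rcases hsep with ⟨hp, hn⟩ | ⟨hn, hp⟩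
      · nlinarith [hp x₀ hx₀C, hn z hzD]
      · nlinarith [hn x₀ hx₀C, hp z hzD]
    · rintro ⟨hfA, hXf⟩
      refine ⟨hfA, ?_⟩
      have hneg : f z * f x₀ < 0 := hzx f hfA hXf
      rcases lt_or_gt_of_ne (hx₀ f hfA) with h2 | h2
      · have hfz : 0 < f z := by nlinarith
        refine Or.inr ⟨fun x hx => ?_, fun x hx => ?_⟩
        · nlinarith [hCmem x hx f hfA]
        · nlinarith [hDmem x hx f hfA]
      · have hfz : f z < 0 := by nlinarith
        refine Or.inl ⟨fun x hx => ?_, fun x hx => ?_⟩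
        · nlinarith [hCmem x hx f hfA]
        · nlinarith [hDmem x hx f hfA]
  · -- uniqueness
    rintro D' ⟨⟨z', hz'Ω, hD'eq⟩, hcl', hsep'⟩
    have hD'mem : ∀ x ∈ D', ∀ f ∈ A, 0 < f x * f z' := by
      intro x hx
      rw [hD'eq, chamber_eq_region A hz'Ω] at hx
      exact hx
    have hz'D' : z' ∈ D' := hD'eq ▸ mem_connectedComponentIn hz'Ω
    have hz'D : z' ∈ connectedComponentIn (arrComplement A) z := by
      rw [hDreg]
      intro f hf
      by_cases hXf : X ≤ LinearMap.ker f
      · have hsepf : Separates f C D' := by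
          have hmem : f ∈ sepSet A C D' := by
            rw [hsep']; exact ⟨hf, hXf⟩
          exact hmem.2
        have h1 : f z' * f x₀ < 0 := by
          rcases hsepf with ⟨hp, hn⟩ | ⟨hn, hp⟩
          · nlinarith [hp x₀ hx₀C, hn z' hz'D']
          · nlinarith [hn x₀ hx₀C, hp z' hz'D']
        refine transfer_neg h1 ?_
        have h3 := hzx f hf hXf
        rw [mul_comm]; exact h3
      · have hnsep : ¬ Separates f C D' := by
          intro hsep2
          have hmem : f ∈ sepSet A C D' := ⟨hf, hsep2⟩
          rw [hsep'] at hmem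
          exact hXf hmem.2
        have h1 : 0 < f z' * f x₀ := by
          rcases lt_trichotomy (f z' * f x₀) 0 with h | h | h
          · exfalso
            apply hnsep
            clear hnsep hXf
            rcases lt_or_gt_of_ne (hx₀ f hf) with h2 | h2
            · have hfz' : 0 < f z' := by nlinarith
              refine Or.inr ⟨fun x hx => ?_, fun x hx => ?_⟩
              · nlinarith [hCmem x hx f hf]
              · nlinarith [hD'mem x hx f hf]
            · have hfz' : f z' < 0 := by nlinarith
              refine Or.inl ⟨fun x hx => ?_, fun x hx => ?_⟩
              · nlinarith [hCmem x hx f hf]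
              · nlinarith [hD'mem x hx f hf]
          · exact absurd h (mul_ne_zero (hz'Ω f hf) (hx₀ f hf))
          · exact h
        refine transfer_pos h1 ?_
        have h3 := hzx' f hf hXf
        rw [mul_comm]; exact h3
    rw [hD'eq, ← connectedComponentIn_eq hz'D]
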